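/- Let U(ℓ)(x,y) = (x, y + V(ℓ)x) be a unipotent ℤ^p-action on ℤ^{q-k} × ℤ^k where V : ℤ^p → Hom(ℤ^{q-k}, ℤ^k) is additive, and suppose for every ℓ ∈ ℤ^p the real rank of V(ℓ) : ℝ^{q-k} → ℝ^k is less than k. Choose a k×p real matrix (α_{ij}) whose entries are linearly independent over ℚ together with 1 (so that ⟨m, α(ℓ)⟩ ∉ ℤ for all m ∈ ℤ^k∖{0}, ℓ ∈ ℤ^p∖{0}, where α(ℓ) = (α_{ij})·ℓ). Then the affine ℤ^p-action φ(ℓ)(x,y) = (x, y + V(ℓ)x + α(ℓ)) on the torus T^q = ℝ^q/ℤ^q is free: φ(ℓ) has no fixed point in T^q for ℓ ≠ 0. -/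

import Mathlib

open Matrix


lemma exists_int_rel {k m : ℕ} (A : Matrix (Fin k) (Fin m) ℤ)
    (h : ((A.map (Int.cast : ℤ → ℝ))).rank < k) :
    ∃ mv : Fin k → ℤ, mv ≠ 0 ∧
      Matrix.vecMul (fun i => (mv i : ℝ)) (A.map (Int.cast : ℤ → ℝ)) = 0 := by
  set Aq : Matrix (Fin k) (Fin m) ℚ := A.map (Int.cast : ℤ → ℚ) with hAq
  have hmap : Aq.map (Rat.cast : ℚ → ℝ) = A.map (Int.cast : ℤ → ℝ) := by
    ext i j
    simp [hAq]
  -- Step 1: rational relation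
  have hw : ∃ w : Fin k → ℚ, w ≠ 0 ∧ w ᵥ* Aq = 0 := by
    by_contra hcon
    push_neg at hcon
    have hinj : LinearMap.ker (Matrix.mulVecLin Aqᵀ) = ⊥ := by
      rw [LinearMap.ker_eq_bot']
      intro w hw0
      by_contra hne
      exact hcon w hne (by rwa [Matrix.mulVecLin_transpose] at hw0)
    obtain ⟨g, hg⟩ := (Matrix.mulVecLin Aqᵀ).exists_leftInverse_of_injective hinj
    have hBA : (LinearMap.toMatrix' g) * Aqᵀ = 1 := by
      have := congrArg LinearMap.toMatrix' hg
      rwa [LinearMap.toMatrix'_comp, LinearMap.toMatrix'_id,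
        ← Matrix.toLin'_apply', LinearMap.toMatrix'_toLin'] at this
    have hAB : Aq * (LinearMap.toMatrix' g)ᵀ = 1 := by
      have := congrArg Matrix.transpose hBA
      rwa [Matrix.transpose_mul, Matrix.transpose_transpose, Matrix.transpose_one] at this
    have hABr : (A.map (Int.cast : ℤ → ℝ)) *
        (((LinearMap.toMatrix' g)ᵀ).map (Rat.cast : ℚ → ℝ)) = 1 := by
      have h1 : (Aq * (LinearMap.toMatrix' g)ᵀ).map ((Rat.castHom ℝ) : ℚ → ℝ)
          = (Aq.map (Rat.cast : ℚ → ℝ)) * (((LinearMap.toMatrix' g)ᵀ).map (Rat.cast : ℚ → ℝ)) :=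
        Matrix.map_mul
      rw [hAB] at h1
      rw [← hmap, ← h1]
      simp
    have hk : (k : ℕ) ≤ (A.map (Int.cast : ℤ → ℝ)).rank := by
      have h1 := Matrix.rank_mul_le_left (A.map (Int.cast : ℤ → ℝ))
        (((LinearMap.toMatrix' g)ᵀ).map (Rat.cast : ℚ → ℝ))
      rw [hABr, Matrix.rank_one] at h1
      simpa using h1
    omega
  obtain ⟨w, hwne, hw0⟩ := hw
  -- Step 2: clear denominators
  set D : ℤ := ∏ j, ((w j).den : ℤ) with hD
  have hDne : D ≠ 0 := by
    rw [hD]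
    exact Finset.prod_ne_zero_iff.2 fun j _ => Int.natCast_ne_zero.2 (w j).den_nz
  have key : ∀ i, (((D / ((w i).den : ℤ)) * (w i).num : ℤ) : ℚ) = (D : ℚ) * w i := by
    intro i
    have hdvd : ((w i).den : ℤ) ∣ D := Finset.dvd_prod_of_mem _ (Finset.mem_univ i)
    have hden : ((w i).den : ℚ) ≠ 0 := by exact_mod_cast (w i).den_nz
    have h1 : ((D / ((w i).den : ℤ)) * ((w i).den : ℤ) : ℤ) = D := Int.ediv_mul_cancel hdvd
    have h2 : (w i) * ((w i).den : ℚ) = ((w i).num : ℚ) := by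
      have hq := Rat.num_div_den (w i)
      calc w i * ((w i).den : ℚ)
          = (((w i).num : ℚ) / ((w i).den : ℚ)) * ((w i).den : ℚ) := by rw [hq]
        _ = ((w i).num : ℚ) := div_mul_cancel₀ _ hden
    have h3 : ((D / ((w i).den : ℤ)) * (w i).num * ((w i).den : ℤ) : ℤ) = D * (w i).num := by
      rw [mul_right_comm, h1]
    apply mul_right_cancel₀ hden
    calc (((D / ((w i).den : ℤ)) * (w i).num : ℤ) : ℚ) * (((w i).den : ℤ) : ℚ)
        = (((D / ((w i).den : ℤ)) * (w i).num * ((w i).den : ℤ) : ℤ) : ℚ) := by push_cast; ring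
      _ = ((D * (w i).num : ℤ) : ℚ) := by rw [h3]
      _ = (D : ℚ) * ((w i).num : ℚ) := by push_cast; ring
      _ = (D : ℚ) * ((w i) * ((w i).den : ℚ)) := by rw [h2]
      _ = ((D : ℚ) * w i) * (((w i).den : ℤ) : ℚ) := by push_cast; ring
  refine ⟨fun i => (D / ((w i).den : ℤ)) * (w i).num, ?_, ?_⟩
  · obtain ⟨i, hi⟩ : ∃ i, w i ≠ 0 := by
      by_contra hc; push_neg at hc; exact hwne (funext hc)
    intro hz
    have hzi : ((D / ((w i).den : ℤ)) * (w i).num : ℤ) = 0 := congrFun hz i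
    have : (D : ℚ) * w i = 0 := by rw [← key i, hzi]; simp
    rcases mul_eq_zero.1 this with h1 | h1
    · exact hDne (by exact_mod_cast h1)
    · exact hi h1
  · have hv : (fun i => (D : ℚ) * w i) ᵥ* Aq = 0 := by
      have hveq : (fun i => (D : ℚ) * w i) = (D : ℚ) • w := by
        funext i; simp [smul_eq_mul]
      rw [hveq, Matrix.smul_vecMul, hw0, smul_zero]
    funext j
    have hmapv := RingHom.map_vecMul (Rat.castHom ℝ) Aq (fun i => (D : ℚ) * w i) j
    rw [hv] at hmapv
    simp only [Pi.zero_apply, map_zero] at hmapv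
    have hvec : (fun i => ((((D / ((w i).den : ℤ)) * (w i).num : ℤ) : ℤ) : ℝ))
        = ((Rat.castHom ℝ) ∘ fun i => (D : ℚ) * w i) := by
      funext i
      simp only [Function.comp_apply, Rat.coe_castHom, ← key i]
      push_cast
      ring
    rw [← hmap]
    show ((fun i => ((((D / ((w i).den : ℤ)) * (w i).num : ℤ) : ℤ) : ℝ)) ᵥ*
      (Aq.map (Rat.cast : ℚ → ℝ))) j = 0
    rw [hvec]
    exact hmapv.symm


/-- Let `U(ℓ)(x,y) = (x, y + V(ℓ)x)` be a unipotent `ℤ^p`-action on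
`ℤ^m × ℤ^k` (`m = q - k`), with `V` additive and each `V(ℓ)` of real rank `< k`.
If `α(ℓ) = (α_{ij})·ℓ` with `⟨m, α(ℓ)⟩ ∉ ℤ` for all `m ∈ ℤ^k∖{0}`, `ℓ ∈ ℤ^p∖{0}`,
then the affine action `φ(ℓ)(x,y) = (x, y + V(ℓ)x + α(ℓ))` on `T^q = ℝ^q/ℤ^q` is free:
no point lifts to a fixed point modulo `ℤ^q` for `ℓ ≠ 0`. -/
theorem stmt10 (p k m : ℕ)
    (V : (Fin p → ℤ) → Matrix (Fin k) (Fin m) ℤ)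
    (hV : ∀ ℓ ℓ', V (ℓ + ℓ') = V ℓ + V ℓ')
    (hrank : ∀ ℓ, ((V ℓ).map (Int.cast : ℤ → ℝ)).rank < k)
    (a : Matrix (Fin k) (Fin p) ℝ)
    (α : (Fin p → ℤ) → (Fin k → ℝ))
    (hα : ∀ ℓ, α ℓ = a.mulVec fun j => (ℓ j : ℝ))
    (hirr : ∀ mv : Fin k → ℤ, mv ≠ 0 → ∀ ℓ : Fin p → ℤ, ℓ ≠ 0 →
      ¬ ∃ z : ℤ, (∑ i, (mv i : ℝ) * α ℓ i) = (z : ℝ)) :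
    ∀ ℓ : Fin p → ℤ, ℓ ≠ 0 → ∀ (x : Fin m → ℝ) (y : Fin k → ℝ),
      ¬ ∃ (N₁ : Fin m → ℤ) (N₂ : Fin k → ℤ),
        (x, y + ((V ℓ).map (Int.cast : ℤ → ℝ)).mulVec x + α ℓ)
          = (x + fun i => ((N₁ i : ℤ) : ℝ), y + fun i => ((N₂ i : ℤ) : ℝ)) := by
  intro ℓ hℓ x y ⟨N₁, N₂, heq⟩
  have hsnd : y + ((V ℓ).map (Int.cast : ℤ → ℝ)).mulVec x + α ℓ
      = y + fun i => ((N₂ i : ℤ) : ℝ) := congrArg Prod.snd heq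
  have hfix : ((V ℓ).map (Int.cast : ℤ → ℝ)).mulVec x + α ℓ
      = fun i => ((N₂ i : ℤ) : ℝ) := by
    have := hsnd
    rw [add_assoc] at this
    exact add_left_cancel this
  obtain ⟨mv, hmv0, hker⟩ := exists_int_rel (V ℓ) (hrank ℓ)
  refine hirr mv hmv0 ℓ hℓ ⟨∑ i, mv i * N₂ i, ?_⟩
  have hαi : ∀ i, α ℓ i = ((N₂ i : ℤ) : ℝ) - (((V ℓ).map (Int.cast : ℤ → ℝ)).mulVec x) i := by
    intro i
    have := congrFun hfix i
    simp only [Pi.add_apply] at this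
    linarith
  have hz : ∑ i, (mv i : ℝ) * (((V ℓ).map (Int.cast : ℤ → ℝ)).mulVec x) i = 0 := by
    have hd : (fun i => (mv i : ℝ)) ⬝ᵥ (((V ℓ).map (Int.cast : ℤ → ℝ)) *ᵥ x)
        = ((fun i => (mv i : ℝ)) ᵥ* ((V ℓ).map (Int.cast : ℤ → ℝ))) ⬝ᵥ x :=
      Matrix.dotProduct_mulVec _ _ _
    rw [hker] at hd
    simpa [dotProduct] using hd
  calc ∑ i, (mv i : ℝ) * α ℓ i
      = ∑ i, ((mv i : ℝ) * ((N₂ i : ℤ) : ℝ)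
          - (mv i : ℝ) * (((V ℓ).map (Int.cast : ℤ → ℝ)).mulVec x) i) := by
        refine Finset.sum_congr rfl fun i _ => ?_
        rw [hαi i]; ring
    _ = ∑ i, (mv i : ℝ) * ((N₂ i : ℤ) : ℝ)
          - ∑ i, (mv i : ℝ) * (((V ℓ).map (Int.cast : ℤ → ℝ)).mulVec x) i :=
        Finset.sum_sub_distrib _ _
    _ = ∑ i, (mv i : ℝ) * ((N₂ i : ℤ) : ℝ) := by rw [hz, sub_zero]
    _ = ((∑ i, mv i * N₂ i : ℤ) : ℝ) := by push_cast; ring
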